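/- Suppose b = z_{t0}. Let (U, X) be an admissible pair for Problem (P) with initial time t0, initial state x_{t0} and level b. Define V_t = E[g(X_T) | ℱ_{t0:t+1}] − E[g(X_T) | ℱ_{t0:t}] for t = t0,…,T−1, and Z_{t0} = z_{t0}, Z_{t+1} = Z_t + V_t. Then g(X_T) is integrable, each V_t is well defined and integrable, and (U, V, X, Z) is an admissible quadruple for Problem (E) with initial time t0 and initial point (x_{t0}, z_{t0}), having the same cost as (U, X). -/

import Mathlib

open MeasureTheory ProbabilityTheory
open scoped ENNReal BigOperators

section Setup

variable {Ω : Type*} [MeasurableSpace Ω] {T m : ℕ}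
  {𝕏 : ℕ → Type*} [∀ t, MeasurableSpace (𝕏 t)]
  {𝕌 : ℕ → Type*} [∀ t, MeasurableSpace (𝕌 t)]
  {𝕎 : ℕ → Type*} [∀ t, MeasurableSpace (𝕎 t)]

/-- The σ-field `ℱ_{t0:t} = σ(w_{t0+1}, …, w_t)` generated by the noise variables,
with `ℱ_{t0:t0}` the trivial σ-field. -/
def noiseFiltration (w : (t : ℕ) → Ω → 𝕎 t) (t0 t : ℕ) : MeasurableSpace Ω :=
  ⨆ s ∈ Set.Icc (t0 + 1) t, MeasurableSpace.comap (w s) inferInstance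

variable (μ : Measure Ω) (w : (t : ℕ) → Ω → 𝕎 t)
  (f : (t : ℕ) → 𝕏 t → 𝕌 t → 𝕎 (t + 1) → 𝕏 (t + 1))
  (L : (t : ℕ) → 𝕏 t → 𝕌 t → 𝕎 (t + 1) → ℝ≥0∞)
  (K : 𝕏 T → ℝ≥0∞) (g : 𝕏 T → Fin m → ℝ)

/-- Admissible pair `(U, X)` for Problem (P) with initial time `t0`, initial state `x0`
and constraint level `b`: initial condition, dynamics, nonanticipativity, and the final
expectation constraint `E[g(X_T)] ≤ b` (componentwise, `g(X_T)` being integrable). -/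
def AdmissibleP (t0 : ℕ) (x0 : 𝕏 t0) (b : Fin m → ℝ)
    (U : (t : ℕ) → Ω → 𝕌 t) (X : (t : ℕ) → Ω → 𝕏 t) : Prop :=
  (∀ ω, X t0 ω = x0) ∧
  (∀ t, t0 ≤ t → t < T → ∀ ω, X (t + 1) ω = f t (X t ω) (U t ω) (w (t + 1) ω)) ∧
  (∀ t, t0 ≤ t → t < T →
    MeasurableSpace.comap (U t) inferInstance ≤ noiseFiltration w t0 t) ∧
  Integrable (fun ω => g (X T ω)) μ ∧
  (∀ i, ∫ ω, g (X T ω) i ∂μ ≤ b i)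

/-- Cost of a pair `(U, X)` in Problem (P). -/
noncomputable def costP (t0 : ℕ) (U : (t : ℕ) → Ω → 𝕌 t) (X : (t : ℕ) → Ω → 𝕏 t) : ℝ≥0∞ :=
  ∫⁻ ω, (∑ t ∈ Finset.Ico t0 T, L t (X t ω) (U t ω) (w (t + 1) ω)) + K (X T ω) ∂μ

/-- Admissible quadruple `(U, V, X, Z)` for Problem (E) with initial time `t0` and
initial point `(x0, z0)`: dynamics and nonanticipativity for `(U, X)`, integrability,
nonanticipativity and the martingale-type constraint `E[V_t | ℱ_{t0:t}] = 0` for `V`,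
the dynamics `Z_{t+1} = Z_t + V_t`, and the a.s. final constraint `g(X_T) ≤ Z_T`. -/
def AdmissibleE (t0 : ℕ) (x0 : 𝕏 t0) (z0 : Fin m → ℝ)
    (U : (t : ℕ) → Ω → 𝕌 t) (V : ℕ → Ω → Fin m → ℝ)
    (X : (t : ℕ) → Ω → 𝕏 t) (Z : ℕ → Ω → Fin m → ℝ) : Prop :=
  (∀ ω, X t0 ω = x0) ∧
  (∀ t, t0 ≤ t → t < T → ∀ ω, X (t + 1) ω = f t (X t ω) (U t ω) (w (t + 1) ω)) ∧
  (∀ t, t0 ≤ t → t < T →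
    MeasurableSpace.comap (U t) inferInstance ≤ noiseFiltration w t0 t) ∧
  (∀ t, t0 ≤ t → t < T →
    Integrable (V t) μ ∧
    MeasurableSpace.comap (V t) inferInstance ≤ noiseFiltration w t0 (t + 1) ∧
    μ[V t | noiseFiltration w t0 t] =ᵐ[μ] 0) ∧
  (∀ ω, Z t0 ω = z0) ∧
  (∀ t, t0 ≤ t → t < T → ∀ ω, Z (t + 1) ω = Z t ω + V t ω) ∧
  (∀ᵐ ω ∂μ, ∀ i, g (X T ω) i ≤ Z T ω i)

/-- Cost of a quadruple `(U, V, X, Z)` in Problem (E) (the same expression as in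
Problem (P)). -/
noncomputable def costE (t0 : ℕ) (U : (t : ℕ) → Ω → 𝕌 t) (V : ℕ → Ω → Fin m → ℝ)
    (X : (t : ℕ) → Ω → 𝕏 t) (Z : ℕ → Ω → Fin m → ℝ) : ℝ≥0∞ :=
  ∫⁻ ω, (∑ t ∈ Finset.Ico t0 T, L t (X t ω) (U t ω) (w (t + 1) ω)) + K (X T ω) ∂μ

end Setup

/-- **From Problem (P) to Problem (E) (first part of the equivalence).**
Suppose `b = z_{t0}` and `(U, X)` is admissible for Problem (P). Define
`V_t = E[g(X_T) | ℱ_{t0:t+1}] − E[g(X_T) | ℱ_{t0:t}]` and `Z_{t0} = z_{t0}`,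
`Z_{t+1} = Z_t + V_t`. Then `g(X_T)` is integrable, each `V_t` is well defined and
integrable, and `(U, V, X, Z)` is admissible for Problem (E) with the same cost. -/
theorem admissibleP_to_admissibleE
    {Ω : Type*} [MeasurableSpace Ω] {T m : ℕ}
    {𝕏 : ℕ → Type*} [∀ t, MeasurableSpace (𝕏 t)]
    {𝕌 : ℕ → Type*} [∀ t, MeasurableSpace (𝕌 t)]
    {𝕎 : ℕ → Type*} [∀ t, MeasurableSpace (𝕎 t)]
    (μ : Measure Ω) [IsProbabilityMeasure μ]
    (w : (t : ℕ) → Ω → 𝕎 t) (hw : ∀ t, Measurable (w t))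
    (f : (t : ℕ) → 𝕏 t → 𝕌 t → 𝕎 (t + 1) → 𝕏 (t + 1))
    (hf : ∀ t, Measurable fun p : 𝕏 t × 𝕌 t × 𝕎 (t + 1) => f t p.1 p.2.1 p.2.2)
    (L : (t : ℕ) → 𝕏 t → 𝕌 t → 𝕎 (t + 1) → ℝ≥0∞)
    (hL : ∀ t, Measurable fun p : 𝕏 t × 𝕌 t × 𝕎 (t + 1) => L t p.1 p.2.1 p.2.2)
    (K : 𝕏 T → ℝ≥0∞) (hK : Measurable K)
    (g : 𝕏 T → Fin m → ℝ) (hg : Measurable g) (hgpos : ∀ x i, 0 ≤ g x i)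
    (t0 : ℕ) (ht0 : t0 ≤ T) (x0 : 𝕏 t0) (z0 : Fin m → ℝ)
    (U : (t : ℕ) → Ω → 𝕌 t) (X : (t : ℕ) → Ω → 𝕏 t)
    (hUX : AdmissibleP μ w f g t0 x0 z0 U X)
    (V : ℕ → Ω → Fin m → ℝ)
    (hV : ∀ t, V t = fun ω =>
      (μ[fun ω' => g (X T ω') | noiseFiltration w t0 (t + 1)]) ω
        - (μ[fun ω' => g (X T ω') | noiseFiltration w t0 t]) ω)
    (Z : ℕ → Ω → Fin m → ℝ)
    (hZ0 : ∀ ω, Z t0 ω = z0)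
    (hZ : ∀ t, t0 ≤ t → t < T → ∀ ω, Z (t + 1) ω = Z t ω + V t ω) :
    Integrable (fun ω => g (X T ω)) μ ∧
    (∀ t, t0 ≤ t → t < T → Integrable (V t) μ) ∧
    AdmissibleE μ w f g t0 x0 z0 U V X Z ∧
    costE μ w L K t0 U V X Z = costP μ w L K t0 U X := by
    classical
  set F : ℕ → MeasurableSpace Ω := noiseFiltration w t0 with hF
  have hFle : ∀ t, F t ≤ ‹MeasurableSpace Ω› := by
    intro t
    exact iSup₂_le fun s _ => (hw s).comap_le
  have hFmono : ∀ s t, s ≤ t → F s ≤ F t := by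
    intro s t hst
    exact iSup₂_le fun u hu => le_iSup₂ (f := fun u (_ : u ∈ Set.Icc (t0+1) t) =>
      MeasurableSpace.comap (w u) inferInstance) u ⟨hu.1, hu.2.trans hst⟩
  have hFbot : F t0 = ⊥ := by
    have : Set.Icc (t0 + 1) t0 = (∅ : Set ℕ) := Set.Icc_eq_empty (by omega)
    simp [hF, noiseFiltration, this]
  have hgX : Integrable (fun ω => g (X T ω)) μ := hUX.2.2.2.1
  set G : Ω → Fin m → ℝ := fun ω => g (X T ω) with hG
  -- integrability of V
  have hVint : ∀ t, Integrable (V t) μ := by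
    intro t
    rw [hV t]
    exact integrable_condExp.sub integrable_condExp
  -- measurability of X along the filtration
  have hX : ∀ t, t0 ≤ t → t ≤ T → Measurable[F t] (X t) := by
    intro t ht
    induction t, ht using Nat.le_induction with
    | base =>
      intro _
      have : X t0 = fun _ => x0 := funext hUX.1
      rw [this]; exact measurable_const
    | succ t ht ih =>
      intro htT
      have htT' : t < T := htT
      have hXt : Measurable[F t] (X t) := ih (le_of_lt htT')
      have hU : Measurable[F t] (U t) :=
        measurable_iff_comap_le.mpr (hUX.2.2.1 t ht htT')
      have hwm : Measurable[F (t+1)] (w (t+1)) :=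
        measurable_iff_comap_le.mpr (le_iSup₂ (f := fun u (_ : u ∈ Set.Icc (t0+1) (t+1)) =>
          MeasurableSpace.comap (w u) inferInstance) (t+1) ⟨by omega, le_rfl⟩)
      have hle : F t ≤ F (t+1) := hFmono t (t+1) (Nat.le_succ t)
      have hXe : X (t+1) = fun ω => f t (X t ω) (U t ω) (w (t+1) ω) :=
        funext (hUX.2.1 t ht htT')
      rw [hXe]
      exact (hf t).comp (((hXt.mono hle le_rfl)).prodMk
        (((hU.mono hle le_rfl)).prodMk hwm))
  -- conditional expectation at final time is G itself
  have hceT : μ[G | F T] = G :=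
    condExp_of_stronglyMeasurable (hFle T)
      ((hg.comp (hX T ht0 le_rfl)).stronglyMeasurable) hgX
  -- conditional expectation at initial time is the constant integral
  have hcet0 : μ[G | F t0] = fun _ => ∫ ω, G ω ∂μ := by
    rw [hFbot]; exact condExp_bot G
  -- the Z formula
  have hZform : ∀ t, t0 ≤ t → t ≤ T → ∀ ω,
      Z t ω = z0 + (μ[G | F t]) ω - (μ[G | F t0]) ω := by
    intro t ht
    induction t, ht using Nat.le_induction with
    | base =>
      intro _ ω
      rw [hZ0 ω]
      abel
    | succ t ht ih =>
      intro htT ω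
      have htT' : t < T := htT
      rw [hZ t ht htT' ω, ih (le_of_lt htT') ω, hV t]
      simp only [hG]
      abel
  refine ⟨hgX, fun t ht htT => hVint t, ⟨hUX.1, hUX.2.1, hUX.2.2.1, ?_, hZ0, hZ, ?_⟩, rfl⟩
  · -- V properties
    intro t ht htT
    have hle : F t ≤ F (t+1) := hFmono t (t+1) (Nat.le_succ t)
    refine ⟨hVint t, ?_, ?_⟩
    · -- nonanticipativity
      have hsm : Measurable[F (t+1)] (V t) := by
        rw [hV t]
        exact (stronglyMeasurable_condExp.sub
          (stronglyMeasurable_condExp.mono hle)).measurable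
      exact measurable_iff_comap_le.mp hsm
    · -- martingale increment property
      have h1 : μ[V t | F t] =ᵐ[μ] μ[μ[G | F (t+1)] | F t] - μ[μ[G | F t] | F t] := by
        rw [hV t]
        exact condExp_sub (integrable_condExp (m := F (t+1)) (f := G)) (integrable_condExp (m := F t) (f := G)) (F t)
      have h2 : μ[μ[G | F (t+1)] | F t] =ᵐ[μ] μ[G | F t] :=
        condExp_condExp_of_le hle (hFle (t+1))
      have h3 : μ[μ[G | F t] | F t] = μ[G | F t] :=
        condExp_of_stronglyMeasurable (hFle t) stronglyMeasurable_condExp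
          integrable_condExp
      refine h1.trans ?_
      rw [h3]
      filter_upwards [h2] with ω hω
      simp [Pi.sub_apply, hω]
  · -- final constraint
    refine Filter.Eventually.of_forall fun ω i => ?_
    have h := hZform T ht0 le_rfl ω
    rw [hceT, hcet0] at h
    have hint : (∫ ω', G ω' ∂μ) i = ∫ ω', G ω' i ∂μ := by
      exact ((ContinuousLinearMap.proj (R := ℝ) (φ := fun _ : Fin m => ℝ) i).integral_comp_comm hgX).symm
    have hle' : (∫ ω', G ω' ∂μ) i ≤ z0 i := by
      rw [hint]; exact hUX.2.2.2.2 i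
    have : Z T ω i = z0 i + G ω i - (∫ ω', G ω' ∂μ) i := by
      rw [h]; simp [Pi.add_apply, Pi.sub_apply]
    rw [this]
    simp only [hG]
    linarith [hle']
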